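/- Let M₀ be an admissible lattice in N₀ with M₀ ≠ τ(M₀) such that both M₀ + τ(M₀) and M₀ ∩ τ(M₀) are τ-stable. Let T₀ be a lattice with M₀ ⊂¹ T₀ ⊂¹ M₀^∨. Then the following are equivalent: (a) τ(M₀) ⊆ T₀; (b) M₀ ⊆ τ(T₀^∨); (c) T₀ = M₀ + τ(M₀). -/

import Mathlib

noncomputable section

namespace QURZ

variable {W₀ : Type*} [CommRing W₀]

/-- The length of `B / A`: the Krull dimension of the interval `[A, B]`
in the lattice of submodules. -/
noncomputable def relLength {M : Type*} [AddCommGroup M] [Module W₀ M]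
    (A B : Submodule W₀ M) : WithBot ℕ∞ :=
  Order.krullDim (Set.Icc A B)

/-- `SubIdx A B d` means `A ⊆ B` and the quotient `B/A` has length `d`
(written `A ⊂^d B` in the paper). -/
def SubIdx {M : Type*} [AddCommGroup M] [Module W₀ M]
    (A B : Submodule W₀ M) (d : ℕ) : Prop :=
  A ≤ B ∧ relLength A B = ((d : ℕ∞) : WithBot ℕ∞)

/-- The image `c • A` of a submodule `A` under scalar multiplication by `c`. -/
def smulLat {M : Type*} [AddCommGroup M] [Module W₀ M] (c : W₀) (A : Submodule W₀ M) :
    Submodule W₀ M where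
  carrier := {x | ∃ m ∈ A, c • m = x}
  zero_mem' := ⟨0, A.zero_mem, smul_zero c⟩
  add_mem' := by
    rintro a b ⟨m, hm, rfl⟩ ⟨n, hn, rfl⟩
    exact ⟨m + n, A.add_mem hm hn, smul_add c m n⟩
  smul_mem' := by
    rintro d x ⟨m, hm, rfl⟩
    exact ⟨d • m, A.smul_mem d hm, by rw [smul_smul, smul_smul, mul_comm]⟩

/-- The image of a submodule under a `σ₀`-semilinear map, where `σ₀` is a ring
automorphism. -/
def mapLat {M M' : Type*} [AddCommGroup M] [Module W₀ M] [AddCommGroup M'] [Module W₀ M']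
    {σ₀ : W₀ ≃+* W₀} (g : M →ₛₗ[(σ₀ : W₀ →+* W₀)] M') (A : Submodule W₀ M) :
    Submodule W₀ M' where
  carrier := g '' A
  zero_mem' := ⟨0, A.zero_mem, map_zero g⟩
  add_mem' := by
    rintro a b ⟨m, hm, rfl⟩ ⟨n, hn, rfl⟩
    exact ⟨m + n, A.add_mem hm hn, map_add g m n⟩
  smul_mem' := by
    rintro c x ⟨m, hm, rfl⟩
    refine ⟨σ₀.symm c • m, A.smul_mem _ hm, ?_⟩
    rw [map_smulₛₗ]
    simp

variable {K₀ : Type*} [Field K₀] [Algebra W₀ K₀]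
variable {N₀ : Type*} [AddCommGroup N₀] [Module K₀ N₀] [Module W₀ N₀] [IsScalarTower W₀ K₀ N₀]

/-- A lattice: a finitely generated `W₀`-submodule spanning the ambient space over `K₀`. -/
def IsLattice (A : Submodule W₀ N₀) : Prop :=
  A.FG ∧ Submodule.span K₀ (A : Set N₀) = ⊤

/-- The dual lattice with respect to a bilinear form, consisting of the vectors
pairing into `W₀` with all elements of `A`. -/
def dualLat (form : N₀ →ₗ[K₀] N₀ →ₗ[K₀] K₀) (A : Submodule W₀ N₀) : Submodule W₀ N₀ where
  carrier := {x | ∀ y ∈ A, form x y ∈ (algebraMap W₀ K₀).range}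
  zero_mem' := fun y _ => by rw [map_zero, LinearMap.zero_apply]; exact zero_mem _
  add_mem' := by
    intro a b ha hb y hy
    rw [map_add, LinearMap.add_apply]
    exact add_mem (ha y hy) (hb y hy)
  smul_mem' := by
    intro c x hx y hy
    rw [← IsScalarTower.algebraMap_smul K₀ c x, map_smul, LinearMap.smul_apply, smul_eq_mul]
    exact mul_mem (RingHom.mem_range_self _ c) (hx y hy)

/-- An admissible lattice: `p M₀^∨ ⊆ M₀ ⊂² M₀^∨` and `p τ(M₀^∨) ⊆ M₀ ⊂² τ(M₀^∨)`.
These are the `𝔽`-points of the reduced quaternionic unitary Rapoport–Zink space `ℳ`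
with paramodular level. -/
def IsAdmissible (p : ℕ) (form : N₀ →ₗ[K₀] N₀ →ₗ[K₀] K₀)
    {σ₀ : W₀ ≃+* W₀} (τ : N₀ →ₛₗ[(σ₀ : W₀ →+* W₀)] N₀) (M₀ : Submodule W₀ N₀) : Prop :=
  IsLattice (K₀ := K₀) M₀ ∧
  smulLat (p : W₀) (dualLat form M₀) ≤ M₀ ∧
  SubIdx M₀ (dualLat form M₀) 2 ∧
  smulLat (p : W₀) (mapLat τ (dualLat form M₀)) ≤ M₀ ∧
  SubIdx M₀ (mapLat τ (dualLat form M₀)) 2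

/-- A web pair `(S₀, T₀)` for an admissible lattice `M₀`:
`pM₀^∨ ⊂¹ S₀ ⊂¹ M₀ ⊂¹ T₀ ⊂¹ M₀^∨`, `pτ(T₀^∨) ⊆ S₀ ⊆ τ(T₀^∨)` and
`pτ(S₀^∨) ⊆ T₀ ⊆ τ(S₀^∨)`.  Web pairs for `M₀` are the points of the fiber over `M₀`
of the projection from Iwahori level `ℳ_Iw(𝔽)` to `ℳ(𝔽)`. -/
def IsWebPair (p : ℕ) (form : N₀ →ₗ[K₀] N₀ →ₗ[K₀] K₀)
    {σ₀ : W₀ ≃+* W₀} (τ : N₀ →ₛₗ[(σ₀ : W₀ →+* W₀)] N₀)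
    (M₀ S₀ T₀ : Submodule W₀ N₀) : Prop :=
  IsLattice (K₀ := K₀) S₀ ∧ IsLattice (K₀ := K₀) T₀ ∧
  SubIdx (smulLat (p : W₀) (dualLat form M₀)) S₀ 1 ∧
  SubIdx S₀ M₀ 1 ∧ SubIdx M₀ T₀ 1 ∧ SubIdx T₀ (dualLat form M₀) 1 ∧
  smulLat (p : W₀) (mapLat τ (dualLat form T₀)) ≤ S₀ ∧
  S₀ ≤ mapLat τ (dualLat form T₀) ∧
  smulLat (p : W₀) (mapLat τ (dualLat form S₀)) ≤ T₀ ∧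
  T₀ ≤ mapLat τ (dualLat form S₀)


section KrullHelpers


variable {α : Type*} [Preorder α]

lemma krullDim_ge_of_chain2 {a b c : α} (h1 : a < b) (h2 : b < c) :
    (2 : WithBot ℕ∞) ≤ Order.krullDim α := by
  let p : LTSeries α := ⟨2, ![a, b, c], by
    intro i
    fin_cases i <;> simpa⟩
  simpa [p] using (Order.LTSeries.length_le_krullDim p)

lemma krullDim_ge_of_chain3 {a b c d : α} (h1 : a < b) (h2 : b < c) (h3 : c < d) :
    (3 : WithBot ℕ∞) ≤ Order.krullDim α := by
  let p : LTSeries α := ⟨3, ![a, b, c, d], by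
    intro i
    fin_cases i <;> simpa⟩
  simpa [p] using (Order.LTSeries.length_le_krullDim p)

lemma krullDim_ge_of_chain1 {a b : α} (h1 : a < b) :
    (1 : WithBot ℕ∞) ≤ Order.krullDim α := by
  let p : LTSeries α := ⟨1, ![a, b], by
    intro i
    fin_cases i <;> simpa⟩
  simpa [p] using (Order.LTSeries.length_le_krullDim p)

lemma exists_chain1_of_krullDim_ge_one (h : (1 : WithBot ℕ∞) ≤ Order.krullDim α) :
    ∃ a b : α, a < b := by
  by_contra hcon
  push_neg at hcon
  have : Order.krullDim α ≤ 0 := by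
    rw [Order.krullDim]
    apply iSup_le
    intro p
    have : p.length = 0 := by
      by_contra hL
      exact absurd (p.strictMono (show (⟨0, by omega⟩ : Fin (p.length+1)) < ⟨1, by omega⟩ by
        simp [Fin.lt_def])) (hcon _ _)
    simp [this]
  have := le_trans h this
  norm_num at this

lemma exists_chain2_of_krullDim_ge_two (h : (2 : WithBot ℕ∞) ≤ Order.krullDim α) :
    ∃ a b c : α, a < b ∧ b < c := by
  by_contra hcon
  push_neg at hcon
  have : Order.krullDim α ≤ 1 := by
    rw [Order.krullDim]
    apply iSup_le
    intro p
    have : p.length ≤ 1 := by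
      by_contra hL
      push_neg at hL
      have h01 : (⟨0, by omega⟩ : Fin (p.length+1)) < ⟨1, by omega⟩ := by simp [Fin.lt_def]
      have h12 : (⟨1, by omega⟩ : Fin (p.length+1)) < ⟨2, by omega⟩ := by simp [Fin.lt_def]
      exact hcon _ _ _ (p.strictMono h01) (p.strictMono h12)
    exact_mod_cast this
  have := le_trans h this
  norm_num at this

lemma not_chain3_of_krullDim_le_two (h : Order.krullDim α ≤ (2 : WithBot ℕ∞))
    {a b c d : α} (h1 : a < b) (h2 : b < c) (h3 : c < d) : False := by
  have := le_trans (krullDim_ge_of_chain3 h1 h2 h3) h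
  norm_num at this

end KrullHelpers


section LatHelpers

variable {σ₀ : W₀ ≃+* W₀} (τ : N₀ →ₛₗ[(σ₀ : W₀ →+* W₀)] N₀)

lemma mem_mapLat {A : Submodule W₀ N₀} {x : N₀} :
    x ∈ mapLat τ A ↔ ∃ a ∈ A, τ a = x := Iff.rfl

lemma mem_smulLat {c : W₀} {A : Submodule W₀ N₀} {x : N₀} :
    x ∈ smulLat c A ↔ ∃ m ∈ A, c • m = x := Iff.rfl

lemma mem_dualLat {form : N₀ →ₗ[K₀] N₀ →ₗ[K₀] K₀} {A : Submodule W₀ N₀} {x : N₀} :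
    x ∈ dualLat form A ↔ ∀ y ∈ A, form x y ∈ (algebraMap W₀ K₀).range := Iff.rfl

lemma mapLat_mono {A B : Submodule W₀ N₀} (h : A ≤ B) : mapLat τ A ≤ mapLat τ B := by
  rintro x ⟨a, ha, rfl⟩
  exact ⟨a, h ha, rfl⟩

lemma mapLat_le_iff (hinj : Function.Injective τ) {A B : Submodule W₀ N₀} :
    mapLat τ A ≤ mapLat τ B ↔ A ≤ B := by
  constructor
  · intro h x hx
    obtain ⟨b, hb, hbe⟩ := h ⟨x, hx, rfl⟩
    rwa [← hinj hbe]
  · exact mapLat_mono τ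

lemma mapLat_inj (hinj : Function.Injective τ) {A B : Submodule W₀ N₀}
    (h : mapLat τ A = mapLat τ B) : A = B :=
  le_antisymm ((mapLat_le_iff τ hinj).mp h.le) ((mapLat_le_iff τ hinj).mp h.ge)

lemma mapLat_lt_iff (hinj : Function.Injective τ) {A B : Submodule W₀ N₀} :
    mapLat τ A < mapLat τ B ↔ A < B := by
  rw [lt_iff_le_not_ge, lt_iff_le_not_ge, mapLat_le_iff τ hinj, mapLat_le_iff τ hinj]

lemma mapLat_sup {A B : Submodule W₀ N₀} :
    mapLat τ (A ⊔ B) = mapLat τ A ⊔ mapLat τ B := by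
  apply le_antisymm
  · rintro x ⟨a, ha, rfl⟩
    obtain ⟨u, hu, v, hv, rfl⟩ := Submodule.mem_sup.mp ha
    rw [map_add]
    exact Submodule.add_mem_sup ⟨u, hu, rfl⟩ ⟨v, hv, rfl⟩
  · refine sup_le (mapLat_mono τ le_sup_left) (mapLat_mono τ le_sup_right)

/-- Preimage of a submodule under a semilinear map. -/
def preLat (C : Submodule W₀ N₀) : Submodule W₀ N₀ where
  carrier := τ ⁻¹' C
  zero_mem' := by simp only [Set.mem_preimage, map_zero]; exact C.zero_mem
  add_mem' := by
    intro a b ha hb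
    simp only [Set.mem_preimage, map_add] at *
    exact C.add_mem ha hb
  smul_mem' := by
    intro c x hx
    simp only [Set.mem_preimage, map_smulₛₗ] at *
    exact C.smul_mem _ hx

lemma mapLat_preLat (hsurj : Function.Surjective τ) (C : Submodule W₀ N₀) :
    mapLat τ (preLat τ C) = C := by
  apply le_antisymm
  · rintro x ⟨a, ha, rfl⟩
    exact ha
  · intro c hc
    obtain ⟨a, rfl⟩ := hsurj c
    exact ⟨a, hc, rfl⟩

lemma mapLat_covBy (hbij : Function.Bijective τ) {A B : Submodule W₀ N₀} (h : A ⋖ B) :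
    mapLat τ A ⋖ mapLat τ B := by
  refine ⟨(mapLat_lt_iff τ hbij.injective).mpr h.1, ?_⟩
  intro C h1 h2
  rw [← mapLat_preLat τ hbij.surjective C] at h1 h2
  exact h.2 ((mapLat_lt_iff τ hbij.injective).mp h1) ((mapLat_lt_iff τ hbij.injective).mp h2)

end LatHelpers

section FormHelpers

variable (form : N₀ →ₗ[K₀] N₀ →ₗ[K₀] K₀)

lemma form_antisym (halt : ∀ x, form x x = 0) (x y : N₀) : form x y = - form y x := by
  have h := halt (x + y)
  simp only [map_add, LinearMap.add_apply, halt] at h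
  linear_combination h

lemma dualLat_antitone {A B : Submodule W₀ N₀} (h : A ≤ B) :
    dualLat form B ≤ dualLat form A := fun x hx y hy => hx y (h hy)

end FormHelpers



section Core

variable [IsDomain W₀] [IsDiscreteValuationRing W₀] [IsFractionRing W₀ K₀]

lemma lattice_basis_card {A : Submodule W₀ N₀}
    (hspan : Submodule.span K₀ (A : Set N₀) = ⊤) {ι : Type*} [Fintype ι]
    (b : Module.Basis ι W₀ A) : Fintype.card ι = Module.finrank K₀ N₀ := by
  classical
  set v : ι → N₀ := fun i => (b i : N₀) with hv
  have hliW : LinearIndependent W₀ v := b.linearIndependent.map' A.subtype A.ker_subtype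
  have hliK : LinearIndependent K₀ v := hliW.localization K₀ (nonZeroDivisors W₀)
  have hA : A = Submodule.span W₀ (Set.range v) := by
    have h1 := b.span_eq
    have h2 : Submodule.map A.subtype (Submodule.span W₀ (Set.range ⇑b)) =
        Submodule.span W₀ (A.subtype '' Set.range ⇑b) := Submodule.map_span _ _
    rw [h1, Submodule.map_subtype_top] at h2
    rw [h2, ← Set.range_comp]
    rfl
  have hspanv : ⊤ ≤ Submodule.span K₀ (Set.range v) := by
    rw [← hspan, hA]
    rw [show (Submodule.span W₀ (Set.range v) : Set N₀) =
      ((Submodule.span W₀ (Set.range v) : Submodule W₀ N₀) : Set N₀) from rfl]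
    intro x hx
    exact Submodule.span_span_of_tower W₀ K₀ (Set.range v) ▸
      (Submodule.span_mono (Submodule.span_le.mpr Submodule.subset_span) hx)
  have B : Module.Basis ι K₀ N₀ := Module.Basis.mk hliK hspanv
  rw [Module.finrank_eq_card_basis B]

end Core



section RowL

variable {kk : Type*} [CommRing kk] {n : ℕ}

/-- The linear functional given by a row vector. -/
def rowL (u : Fin n → kk) : (Fin n → kk) →ₗ[kk] kk := ∑ j, u j • LinearMap.proj j

lemma rowL_apply (u x : Fin n → kk) : rowL u x = ∑ j, u j * x j := by
  simp [rowL, LinearMap.sum_apply, LinearMap.smul_apply, LinearMap.proj_apply, smul_eq_mul]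

end RowL

section Core2

variable [IsDomain W₀] [IsDiscreteValuationRing W₀] [IsFractionRing W₀ K₀]
variable {σ : K₀ ≃+* K₀} {σ₀ : W₀ ≃+* W₀}

lemma rng_sigma (hσ : ∀ c : W₀, algebraMap W₀ K₀ (σ₀ c) = σ (algebraMap W₀ K₀ c))
    {t : K₀} (h : t ∈ (algebraMap W₀ K₀).range) : σ t ∈ (algebraMap W₀ K₀).range := by
  obtain ⟨c, rfl⟩ := h
  exact ⟨σ₀ c, hσ c⟩

lemma rng_sigma_rev (hσ : ∀ c : W₀, algebraMap W₀ K₀ (σ₀ c) = σ (algebraMap W₀ K₀ c))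
    {t : K₀} (h : σ t ∈ (algebraMap W₀ K₀).range) : t ∈ (algebraMap W₀ K₀).range := by
  obtain ⟨c, hc⟩ := h
  refine ⟨σ₀.symm c, σ.injective ?_⟩
  rw [← hσ (σ₀.symm c), RingEquiv.apply_symm_apply, hc]

lemma dualLat_mapLat
    (hσ : ∀ c : W₀, algebraMap W₀ K₀ (σ₀ c) = σ (algebraMap W₀ K₀ c))
    (form : N₀ →ₗ[K₀] N₀ →ₗ[K₀] K₀)
    {τ : N₀ →ₛₗ[(σ₀ : W₀ →+* W₀)] N₀}
    (hτ_bij : Function.Bijective τ)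
    (hτ_form : ∀ x y, form (τ x) (τ y) = σ (form x y))
    (A : Submodule W₀ N₀) :
    dualLat form (mapLat τ A) = mapLat τ (dualLat form A) := by
  apply le_antisymm
  · intro x hx
    obtain ⟨w, rfl⟩ := hτ_bij.surjective x
    refine ⟨w, ?_, rfl⟩
    intro u hu
    have h1 : form (τ w) (τ u) ∈ (algebraMap W₀ K₀).range := hx (τ u) ⟨u, hu, rfl⟩
    rw [hτ_form] at h1
    exact rng_sigma_rev hσ h1
  · rintro _ ⟨w, hw, rfl⟩ _ ⟨u, hu, rfl⟩
    rw [hτ_form]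
    exact rng_sigma hσ (hw u hu)

lemma lt_sup_map {τ : N₀ →ₛₗ[(σ₀ : W₀ →+* W₀)] N₀}
    {M₀ : Submodule W₀ N₀} (hne : M₀ ≠ mapLat τ M₀)
    (hLstab : mapLat τ (M₀ ⊔ mapLat τ M₀) = M₀ ⊔ mapLat τ M₀) :
    M₀ < M₀ ⊔ mapLat τ M₀ := by
  have hτnotle : ¬ mapLat τ M₀ ≤ M₀ := by
    intro hle
    have h1 : mapLat τ (mapLat τ M₀) ≤ mapLat τ M₀ := mapLat_mono τ hle
    have h2 : M₀ ⊔ mapLat τ M₀ ≤ mapLat τ M₀ := by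
      conv_lhs => rw [← hLstab]
      rw [mapLat_sup]
      exact sup_le le_rfl h1
    exact hne (le_antisymm (le_sup_left.trans h2) hle)
  refine lt_of_le_of_ne le_sup_left (fun h => hτnotle ?_)
  nth_rewrite 2 [h]
  exact le_sup_right

lemma covBy_of_subIdx_one {A B : Submodule W₀ N₀} (h : SubIdx A B 1) : A ⋖ B := by
  obtain ⟨hle, hdim⟩ := h
  have hdim' : Order.krullDim (Set.Icc A B) = (1 : WithBot ℕ∞) := by
    have : relLength A B = (1 : WithBot ℕ∞) := by rw [hdim]; norm_cast
    unfold relLength at this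
    exact this
  constructor
  · obtain ⟨a, b, hab⟩ := exists_chain1_of_krullDim_ge_one (α := Set.Icc A B) (le_of_eq hdim'.symm)
    have : (a : Submodule W₀ N₀) < b := hab
    exact lt_of_le_of_lt a.2.1 (lt_of_lt_of_le this b.2.2)
  · intro C h1 h2
    have := krullDim_ge_of_chain2 (α := Set.Icc A B)
      (a := ⟨A, le_rfl, hle⟩) (b := ⟨C, h1.le, h2.le⟩) (c := ⟨B, hle, le_rfl⟩)
      (by exact h1) (by exact h2)
    rw [hdim'] at this
    norm_num at this

lemma coe_sum_smul (A : Submodule W₀ N₀) {m : ℕ} (c : Fin m → W₀) (v : Fin m → A) :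
    ((∑ i, c i • v i : A) : N₀) = ∑ i, c i • (v i : N₀) := by
  calc ((∑ i, c i • v i : A) : N₀) = A.subtype (∑ i, c i • v i) := rfl
  _ = ∑ i, A.subtype (c i • v i) := map_sum _ _ _
  _ = ∑ i, c i • (v i : N₀) := by simp

end Core2



section LemmaA

variable [IsDomain W₀] [IsDiscreteValuationRing W₀] [IsFractionRing W₀ K₀]
variable {σ : K₀ ≃+* K₀} {σ₀ : W₀ ≃+* W₀}

lemma unit_smul_mem {A : Submodule W₀ N₀} {u : W₀} (hu : IsUnit u) {x : N₀}
    (h : u • x ∈ A) : x ∈ A := by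
  obtain ⟨w, rfl⟩ := hu
  have h2 := A.smul_mem ((w⁻¹ : W₀ˣ) : W₀) h
  rwa [smul_smul, ← Units.val_mul, inv_mul_cancel, Units.val_one, one_smul] at h2

set_option maxHeartbeats 2000000 in
theorem lemmaA
    {p : ℕ} (hp_irr : Irreducible ((p : ℕ) : W₀))
    (hσ : ∀ c : W₀, algebraMap W₀ K₀ (σ₀ c) = σ (algebraMap W₀ K₀ c))
    (hdim : Module.finrank K₀ N₀ = 4)
    {form : N₀ →ₗ[K₀] N₀ →ₗ[K₀] K₀}
    (halt : ∀ x, form x x = 0)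
    {τ : N₀ →ₛₗ[(σ₀ : W₀ →+* W₀)] N₀}
    (hτ_bij : Function.Bijective τ)
    (hτ_form : ∀ x y, form (τ x) (τ y) = σ (form x y))
    {M₀ : Submodule W₀ N₀}
    (hlat : IsLattice (K₀ := K₀) M₀)
    (hpD : smulLat ((p : ℕ) : W₀) (dualLat form M₀) ≤ M₀)
    (hsub2 : SubIdx M₀ (dualLat form M₀) 2)
    (hne : M₀ ≠ mapLat τ M₀)
    (hLstab : mapLat τ (M₀ ⊔ mapLat τ M₀) = M₀ ⊔ mapLat τ M₀)
    (hΛstab : mapLat τ (dualLat form M₀) = dualLat form M₀) : False := by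
  classical
  set Λ : Submodule W₀ N₀ := dualLat form M₀ with hΛdef
  set L : Submodule W₀ N₀ := M₀ ⊔ mapLat τ M₀ with hLdef
  set rng : Subring K₀ := (algebraMap W₀ K₀).range with hrng
  have hMΛ : M₀ ≤ Λ := hsub2.1
  have alg_inj : Function.Injective (algebraMap W₀ K₀) := IsFractionRing.injective W₀ K₀
  have hp0 : ((p : ℕ) : W₀) ≠ 0 := hp_irr.ne_zero
  have hpK : (algebraMap W₀ K₀ ((p : ℕ) : W₀)) ≠ 0 := fun h =>
    hp0 (alg_inj (by rw [h, map_zero]))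
  have hdivp : ∀ c : W₀, ¬ IsUnit c → ((p : ℕ) : W₀) ∣ c := by
    intro c hc
    have h1 : c ∈ IsLocalRing.maximalIdeal W₀ := (IsLocalRing.mem_maximalIdeal c).mpr hc
    rw [hp_irr.maximalIdeal_eq] at h1
    exact Ideal.mem_span_singleton.mp h1
  -- basic integrality facts
  have hΛM : ∀ x ∈ Λ, ∀ m ∈ M₀, form x m ∈ rng := fun x hx => hx
  have hMΛf : ∀ m ∈ M₀, ∀ x ∈ Λ, form m x ∈ rng := by
    intro m hm x hx
    rw [form_antisym form halt]
    exact neg_mem (hΛM x hx m hm)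
  have hτM_le : mapLat τ M₀ ≤ Λ := by
    conv_rhs => rw [← hΛstab]
    exact mapLat_mono τ hMΛ
  have hL_le : L ≤ Λ := sup_le hMΛ hτM_le
  have hΛτM : ∀ x ∈ Λ, ∀ u ∈ M₀, form x (τ u) ∈ rng := by
    intro x hx u hu
    have hx2 : x ∈ mapLat τ Λ := by rw [hΛstab]; exact hx
    obtain ⟨w, hw, rfl⟩ := hx2
    rw [hτ_form]
    exact rng_sigma hσ (hΛM w hw u hu)
  have hΛL : ∀ x ∈ Λ, ∀ y ∈ L, form x y ∈ rng := by
    intro x hx y hy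
    obtain ⟨m, hm, z, hz, rfl⟩ := Submodule.mem_sup.mp hy
    obtain ⟨u, hu, rfl⟩ := hz
    rw [map_add]
    exact add_mem (hΛM x hx m hm) (hΛτM x hx u hu)
  have hLΛ : ∀ y ∈ L, ∀ x ∈ Λ, form y x ∈ rng := by
    intro y hy x hx
    rw [form_antisym form halt]
    exact neg_mem (hΛL x hx y hy)
  have hML : M₀ < L := lt_sup_map hne hLstab
  -- Λ is finitely generated and free
  have hpmem : ∀ x ∈ Λ, ((p : ℕ) : W₀) • x ∈ M₀ := fun x hx => hpD ⟨x, hx, rfl⟩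
  haveI : Module.Finite W₀ M₀ := Module.Finite.iff_fg.mpr hlat.1
  haveI : IsNoetherian W₀ M₀ := isNoetherian_of_isNoetherianRing_of_finite W₀ M₀
  have hsmul_inj : ∀ (x y : N₀), ((p : ℕ) : W₀) • x = ((p : ℕ) : W₀) • y → x = y := by
    intro x y hxy
    rw [← IsScalarTower.algebraMap_smul K₀ ((p : ℕ) : W₀) x,
      ← IsScalarTower.algebraMap_smul K₀ ((p : ℕ) : W₀) y] at hxy
    exact smul_right_injective N₀ hpK hxy
  have hΛfg : (⊤ : Submodule W₀ Λ).FG := by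
    let f : Λ →ₗ[W₀] M₀ :=
      { toFun := fun x => ⟨((p : ℕ) : W₀) • (x : N₀), hpmem x x.2⟩
        map_add' := by intro x y; ext; exact smul_add _ _ _
        map_smul' := by
          intro c x
          ext
          simp only [RingHom.id_apply, Submodule.coe_smul_of_tower]
          exact smul_comm _ _ _ }
    have hfinj : Function.Injective f := by
      intro x y hxy
      ext
      exact hsmul_inj _ _ (congrArg Subtype.val hxy)
    exact fg_of_injective f hfinj
  haveI : Module.Finite W₀ Λ := Module.finite_def.mpr hΛfg
  haveI : NoZeroSMulDivisors W₀ Λ := by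
    constructor
    intro c x hcx
    by_cases hc : c = 0
    · exact Or.inl hc
    · right
      have h1 : c • (x : N₀) = 0 := congrArg Subtype.val hcx
      rw [← IsScalarTower.algebraMap_smul K₀ c (x : N₀)] at h1
      have hc' : algebraMap W₀ K₀ c ≠ 0 := fun h => hc (alg_inj (by rw [h, map_zero]))
      ext
      have := smul_eq_zero.mp h1
      simpa [hc'] using this
  haveI : Module.Free W₀ Λ := Module.free_of_finite_type_torsion_free'
  let ιΛ := Module.Free.ChooseBasisIndex W₀ Λ
  let b : Module.Basis ιΛ W₀ Λ := Module.Free.chooseBasis W₀ Λ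
  have hspanΛ : Submodule.span K₀ (Λ : Set N₀) = ⊤ := by
    rw [eq_top_iff, ← hlat.2]
    exact Submodule.span_mono hMΛ
  have hcardι : Fintype.card ιΛ = 4 := by
    rw [lattice_basis_card hspanΛ b, hdim]
  -- Smith normal form
  let N' : Submodule W₀ Λ := M₀.comap Λ.subtype
  obtain ⟨n, snf⟩ := Submodule.smithNormalForm b N'
  have hn4 : n = 4 := by
    have hb : Module.Basis (Fin n) W₀ M₀ := snf.bN.map (Submodule.comapSubtypeEquivOfLe hMΛ)
    have := lattice_basis_card hlat.2 hb
    rw [Fintype.card_fin, hdim] at this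
    exact this
  subst hn4
  have hfbij : Function.Bijective snf.f :=
    (Fintype.bijective_iff_injective_and_card snf.f).mpr
      ⟨snf.f.injective, by rw [Fintype.card_fin, hcardι]⟩
  let e : Fin 4 ≃ ιΛ := Equiv.ofBijective snf.f hfbij
  let bΛ : Module.Basis (Fin 4) W₀ Λ := snf.bM.reindex e.symm
  have hbΛ : ∀ j, bΛ j = snf.bM (snf.f j) := by
    intro j
    rw [Module.Basis.reindex_apply, Equiv.symm_symm]
    rfl
  set a : Fin 4 → W₀ := snf.a with ha
  have hsnf' : ∀ j, ((snf.bN j : Λ)) = a j • bΛ j := by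
    intro j
    rw [hbΛ]
    exact snf.snf j
  set v : Fin 4 → N₀ := fun j => ((bΛ j : Λ) : N₀) with hv
  have hvΛ : ∀ j, v j ∈ Λ := fun j => (bΛ j).2
  have hav : ∀ j, a j • v j ∈ M₀ := by
    intro j
    have h1 : ((snf.bN j : Λ) : N₀) ∈ M₀ := (snf.bN j).2
    rw [hsnf'] at h1
    exact h1
  -- membership criterion
  have hexp : ∀ y : Λ, (y : N₀) = ∑ j, bΛ.repr y j • v j := by
    intro y
    conv_lhs => rw [← bΛ.sum_repr y]
    exact coe_sum_smul Λ _ _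
  have memM_iff : ∀ y : Λ, ((y : N₀) ∈ M₀) ↔ (∀ j, a j ∣ bΛ.repr y j) := by
    intro y
    constructor
    · intro hy
      let y' : N' := ⟨y, Submodule.mem_comap.mpr hy⟩
      have hrep := snf.bN.sum_repr y'
      have hrep2 : (y : Λ) = ∑ j, (snf.bN.repr y' j * a j) • bΛ j := by
        have h3 := congrArg (N'.subtype) hrep
        rw [map_sum] at h3
        have h4 : ∀ j, N'.subtype ((snf.bN.repr y' j) • snf.bN j)
            = (snf.bN.repr y' j * a j) • bΛ j := by
          intro j
          rw [map_smul]
          show (snf.bN.repr y' j) • ((snf.bN j : Λ)) = _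
          rw [hsnf', smul_smul]
        rw [Finset.sum_congr rfl (fun j _ => h4 j)] at h3
        exact h3.symm
      have h5 : ⇑(bΛ.repr y) = fun j => snf.bN.repr y' j * a j := by
        rw [hrep2]
        exact bΛ.repr_sum_self _
      intro j
      rw [h5]
      exact Dvd.intro_left _ rfl
    · intro hdvd
      have hform : ∀ j, ∃ d, bΛ.repr y j = a j * d := fun j => (hdvd j).elim (fun d hd => ⟨d, hd⟩)
      choose d hd using hform
      have h6 : (y : N₀) = ∑ j, d j • (a j • v j) := by
        rw [hexp y]
        refine Finset.sum_congr rfl (fun j _ => ?_)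
        rw [hd j, smul_smul, mul_comm]
      rw [h6]
      exact Submodule.sum_mem _ (fun j _ => Submodule.smul_mem _ _ (hav j))
  have hadvd : ∀ j, a j ∣ ((p : ℕ) : W₀) := by
    intro j
    have h1 : ((((p : ℕ) : W₀) • bΛ j : Λ) : N₀) ∈ M₀ := by
      show ((p : ℕ) : W₀) • ((bΛ j : Λ) : N₀) ∈ M₀
      exact hpmem _ (hvΛ j)
    have h2 := (memM_iff _).mp h1 j
    rwa [map_smul, Finsupp.smul_apply, Module.Basis.repr_self,
      Finsupp.single_eq_same, smul_eq_mul, mul_one] at h2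
  have hvM : ∀ j, IsUnit (a j) → v j ∈ M₀ := fun j hu => unit_smul_mem hu (hav j)
  -- Krull dimension bounds on the interval [M₀, Λ]
  have hkr : Order.krullDim (Set.Icc M₀ Λ) = (2 : WithBot ℕ∞) := by
    have h1 : relLength M₀ Λ = (2 : WithBot ℕ∞) := by rw [hsub2.2]; norm_cast
    unfold relLength at h1
    exact h1
  have le2 : Order.krullDim (Set.Icc M₀ Λ) ≤ (2 : WithBot ℕ∞) := le_of_eq hkr
  set U : Finset (Fin 4) := Finset.univ.filter (fun j => ¬ IsUnit (a j)) with hU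
  have hmemU : ∀ j, j ∈ U ↔ ¬ IsUnit (a j) := by
    intro j; rw [hU, Finset.mem_filter]; simp
  -- not everything is a unit, and not only one index is a non-unit
  have hcases : U.card = 0 ∨ U.card = 1 ∨ U.card = 2 ∨ 3 ≤ U.card := by omega
  -- helper: an element of Λ not in M₀ gives a non-unit coordinate not divisible by p
  have hbad : ∀ y : Λ, (y : N₀) ∉ M₀ → ∃ j, j ∈ U ∧ ¬ ((p : ℕ) : W₀) ∣ bΛ.repr y j := by
    intro y hy
    have h1 : ¬ ∀ j, a j ∣ bΛ.repr y j := fun h => hy ((memM_iff y).mpr h)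
    push_neg at h1
    obtain ⟨j, hj⟩ := h1
    refine ⟨j, (hmemU j).mpr (fun hu => hj hu.dvd), fun hpd => hj ((hadvd j).trans hpd)⟩
  rcases hcases with h0 | h1 | h2 | h3
  · -- no non-units: Λ = M₀, contradicting krullDim = 2
    have hall : ∀ j, IsUnit (a j) := by
      intro j
      by_contra hu
      have : j ∈ U := (hmemU j).mpr hu
      rw [Finset.card_eq_zero] at h0
      rw [h0] at this
      exact absurd this (Finset.notMem_empty j)
    have hEq : Λ = M₀ := by
      apply le_antisymm _ hMΛ
      intro x hx
      exact (memM_iff ⟨x, hx⟩).mpr (fun j => (hall j).dvd)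
    obtain ⟨A, B, hAB⟩ := exists_chain1_of_krullDim_ge_one (α := Set.Icc M₀ Λ)
      (le_trans (by norm_num) (le_of_eq hkr.symm))
    have hA : (A : Submodule W₀ N₀) = M₀ := le_antisymm (A.2.2.trans (le_of_eq hEq)) A.2.1
    have hB : (B : Submodule W₀ N₀) = M₀ := le_antisymm (B.2.2.trans (le_of_eq hEq)) B.2.1
    have : (A : Submodule W₀ N₀) < B := hAB
    rw [hA, hB] at this
    exact lt_irrefl _ this
  · -- exactly one non-unit: the interval has only two elements, contradicting krullDim = 2
    obtain ⟨j₀, hj₀⟩ := Finset.card_eq_one.mp h1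
    have hj₀U : j₀ ∈ U := by rw [hj₀]; exact Finset.mem_singleton_self j₀
    have hunit : ∀ j, j ≠ j₀ → IsUnit (a j) := by
      intro j hj
      by_contra hu
      have : j ∈ U := (hmemU j).mpr hu
      rw [hj₀, Finset.mem_singleton] at this
      exact hj this
    have classify : ∀ X : Submodule W₀ N₀, M₀ ≤ X → X ≤ Λ → X = M₀ ∨ X = Λ := by
      intro X hMX hXΛ
      by_cases hXM : X ≤ M₀
      · exact Or.inl (le_antisymm hXM hMX)
      · right
        obtain ⟨x, hxX, hxM⟩ := SetLike.not_le_iff_exists.mp hXM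
        set y : Λ := ⟨x, hXΛ hxX⟩ with hy
        obtain ⟨j, hjU, hjp⟩ := hbad y hxM
        have hjj₀ : j = j₀ := by
          rw [hj₀, Finset.mem_singleton] at hjU; exact hjU
        subst hjj₀
        have hcu : IsUnit (bΛ.repr y j) := by
          by_contra hcu
          exact hjp (hdivp _ hcu)
        have hvX : ∀ i, i ≠ j → v i ∈ X := fun i hi => hMX (hvM i (hunit i hi))
        have hvjX : v j ∈ X := by
          have hsum : ∑ i, bΛ.repr y i • v i = x := (hexp y).symm
          have hrest : ∑ i ∈ Finset.univ.erase j, bΛ.repr y i • v i ∈ X :=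
            Submodule.sum_mem _ (fun i hi => Submodule.smul_mem _ _
              (hvX i (Finset.ne_of_mem_erase hi)))
          have hterm : bΛ.repr y j • v j ∈ X := by
            have h7 : bΛ.repr y j • v j + ∑ i ∈ Finset.univ.erase j, bΛ.repr y i • v i = x := by
              rw [← hsum]
              exact Finset.add_sum_erase _ (fun i => bΛ.repr y i • v i) (Finset.mem_univ j)
            have h8 : bΛ.repr y j • v j = x - ∑ i ∈ Finset.univ.erase j, bΛ.repr y i • v i := by
              rw [← h7]; abel
            rw [h8]
            exact Submodule.sub_mem _ hxX hrest
          exact unit_smul_mem hcu hterm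
        apply le_antisymm hXΛ
        intro z hz
        have hz2 : z = ∑ i, bΛ.repr (⟨z, hz⟩ : Λ) i • v i := hexp ⟨z, hz⟩
        rw [hz2]
        refine Submodule.sum_mem _ (fun i _ => Submodule.smul_mem _ _ ?_)
        by_cases hi : i = j
        · rw [hi]; exact hvjX
        · exact hvX i hi
    obtain ⟨A, B, C, hAB, hBC⟩ := exists_chain2_of_krullDim_ge_two (α := Set.Icc M₀ Λ)
      (le_of_eq hkr.symm)
    have hABlt : (A : Submodule W₀ N₀) < B := hAB
    have hBClt : (B : Submodule W₀ N₀) < C := hBC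
    rcases classify A A.2.1 A.2.2 with hA | hA
    · rcases classify B B.2.1 B.2.2 with hB | hB
      · rw [hA, hB] at hABlt; exact lt_irrefl _ hABlt
      · have : (C : Submodule W₀ N₀) ≤ Λ := C.2.2
        rw [hB] at hBClt
        exact lt_irrefl _ (lt_of_lt_of_le hBClt this)
    · have : (B : Submodule W₀ N₀) ≤ Λ := B.2.2
      rw [hA] at hABlt
      exact lt_irrefl _ (lt_of_lt_of_le hABlt this)
  · -- main case: exactly two non-units
    obtain ⟨j₁, j₂, hj12, hU2⟩ := Finset.card_eq_two.mp h2
    have hj₁ : ¬ IsUnit (a j₁) := (hmemU j₁).mp (by rw [hU2]; simp)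
    have hj₂ : ¬ IsUnit (a j₂) := (hmemU j₂).mp (by rw [hU2]; simp)
    have hcompl : (Uᶜ : Finset (Fin 4)).card = 2 := by
      rw [Finset.card_compl, h2]
      rfl
    obtain ⟨u₁, u₂, hu12, hUc2⟩ := Finset.card_eq_two.mp hcompl
    have hu₁ : IsUnit (a u₁) := by
      have h4 : u₁ ∈ Uᶜ := by rw [hUc2]; simp
      have h5 := Finset.mem_compl.mp h4
      by_contra hcon
      exact h5 ((hmemU u₁).mpr hcon)
    have hu₂ : IsUnit (a u₂) := by
      have h4 : u₂ ∈ Uᶜ := by rw [hUc2]; simp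
      have h5 := Finset.mem_compl.mp h4
      by_contra hcon
      exact h5 ((hmemU u₂).mpr hcon)
    have hsplit : ∀ j : Fin 4, (j = j₁ ∨ j = j₂) ∨ (j = u₁ ∨ j = u₂) := by
      intro j
      by_cases hjU : j ∈ U
      · left; rw [hU2] at hjU; simpa using hjU
      · right
        have h4 : j ∈ Uᶜ := Finset.mem_compl.mpr hjU
        rw [hUc2] at h4; simpa using h4
    have hUne : ∀ j, j ∈ U → j ≠ u₁ ∧ j ≠ u₂ := by
      intro j hj
      constructor
      · intro h; rw [h] at hj; exact (hmemU u₁).mp hj hu₁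
      · intro h; rw [h] at hj; exact (hmemU u₂).mp hj hu₂
    -- residue field
    set Ip : Ideal W₀ := Ideal.span {((p : ℕ) : W₀)} with hIp
    haveI hmax : Ip.IsMaximal := PrincipalIdealRing.isMaximal_of_irreducible hp_irr
    letI : Field (W₀ ⧸ Ip) := Ideal.Quotient.field Ip
    haveI hfd : FiniteDimensional (W₀ ⧸ Ip) (Fin 4 → W₀ ⧸ Ip) := by infer_instance
    set q : W₀ →+* W₀ ⧸ Ip := Ideal.Quotient.mk Ip with hq
    have hq0 : ∀ c : W₀, q c = 0 ↔ ((p : ℕ) : W₀) ∣ c := by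
      intro c; rw [hq, Ideal.Quotient.eq_zero_iff_mem, hIp, Ideal.mem_span_singleton]
    -- the element g of L not in M₀
    obtain ⟨g, hgL, hgM⟩ := SetLike.exists_of_lt hML
    set ghat : Λ := ⟨g, hL_le hgL⟩ with hghat
    -- matrix entries
    have hwex : ∀ i j : Fin 4, ∃ ww : W₀, algebraMap W₀ K₀ ww =
        (if IsUnit (a i) then form (v j) (v i)
         else algebraMap W₀ K₀ ((p : ℕ) : W₀) * form (v j) (v i)) := by
      intro i j
      by_cases hi : IsUnit (a i)
      · rw [if_pos hi]
        exact hΛM (v j) (hvΛ j) (v i) (hvM i hi)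
      · rw [if_neg hi]
        have h1 : algebraMap W₀ K₀ ((p : ℕ) : W₀) * form (v j) (v i)
            = form (v j) (((p : ℕ) : W₀) • v i) := by
          rw [← IsScalarTower.algebraMap_smul K₀ ((p : ℕ) : W₀) (v i), map_smul, smul_eq_mul]
        rw [h1]
        exact hΛM (v j) (hvΛ j) _ (hpmem _ (hvΛ i))
    choose w hw using hwex
    -- expansion of pairings
    have hform_sum : ∀ (c : Fin 4 → W₀) (z : N₀),
        form (∑ j, c j • v j) z = ∑ j, algebraMap W₀ K₀ (c j) * form (v j) z := by
      intro c z
      rw [map_sum, LinearMap.sum_apply]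
      refine Finset.sum_congr rfl (fun j _ => ?_)
      rw [← IsScalarTower.algebraMap_smul K₀ (c j) (v j), map_smul, LinearMap.smul_apply,
        smul_eq_mul]
    have hpair : ∀ (y : Λ) (i : Fin 4),
        algebraMap W₀ K₀ (∑ j, bΛ.repr y j * w i j) =
        (if IsUnit (a i) then form (y : N₀) (v i)
         else algebraMap W₀ K₀ ((p : ℕ) : W₀) * form (y : N₀) (v i)) := by
      intro y i
      have h1 : form ((y : N₀)) (v i) = ∑ j, algebraMap W₀ K₀ (bΛ.repr y j) * form (v j) (v i) := by
        conv_lhs => rw [hexp y]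
        exact hform_sum _ _
      rw [map_sum]
      by_cases hi : IsUnit (a i)
      · rw [if_pos hi, h1]
        refine Finset.sum_congr rfl (fun j _ => ?_)
        rw [map_mul, hw i j, if_pos hi]
      · rw [if_neg hi, h1, Finset.mul_sum]
        refine Finset.sum_congr rfl (fun j _ => ?_)
        rw [map_mul, hw i j, if_neg hi]
        ring
    -- reductions and row functionals
    set red : Λ → (Fin 4 → W₀ ⧸ Ip) := fun y => fun j => q (bΛ.repr y j) with hred
    set row : Fin 4 → ((Fin 4 → W₀ ⧸ Ip) →ₗ[W₀ ⧸ Ip] (W₀ ⧸ Ip)) :=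
      fun i => rowL (fun j => q (w i j)) with hrow
    have hrow_red : ∀ (i : Fin 4) (y : Λ), row i (red y) = q (∑ j, bΛ.repr y j * w i j) := by
      intro i y
      rw [hrow, rowL_apply, map_sum]
      refine Finset.sum_congr rfl (fun j _ => ?_)
      rw [map_mul, hred]
      ring
    have hker_L : ∀ (y : Λ), (y : N₀) ∈ L → ∀ i, ¬ IsUnit (a i) → row i (red y) = 0 := by
      intro y hy i hi
      rw [hrow_red, hq0]
      obtain ⟨c0, hc0⟩ := hLΛ (y : N₀) hy (v i) (hvΛ i)
      have h2 := hpair y i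
      rw [if_neg hi, ← hc0, ← map_mul] at h2
      exact ⟨c0, alg_inj h2⟩
    set Ψ : (Fin 4 → W₀ ⧸ Ip) →ₗ[W₀ ⧸ Ip] (W₀ ⧸ Ip) × (W₀ ⧸ Ip) := (row j₁).prod (row j₂) with hΨ
    set Φ : (Fin 4 → W₀ ⧸ Ip) →ₗ[W₀ ⧸ Ip] (W₀ ⧸ Ip) × (W₀ ⧸ Ip) := (row u₁).prod (row u₂) with hΦ
    have hkerΨ : ∀ (y : Λ), (y : N₀) ∈ L → red y ∈ LinearMap.ker Ψ := by
      intro y hy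
      rw [LinearMap.mem_ker, hΨ, LinearMap.prod_apply, Prod.mk_eq_zero]
      exact ⟨hker_L y hy j₁ hj₁, hker_L y hy j₂ hj₂⟩
    have hredb : ∀ u j : Fin 4, red (bΛ u) j = if u = j then 1 else 0 := by
      intro u j
      rw [hred]
      show q (bΛ.repr (bΛ u) j) = _
      rw [Module.Basis.repr_self, Finsupp.single_apply]
      split <;> simp
    have hvLmem : ∀ u, IsUnit (a u) → ((bΛ u : Λ) : N₀) ∈ L :=
      fun u hu => Submodule.mem_sup_left (hvM u hu)
    set e1 : Fin 4 → W₀ ⧸ Ip := red (bΛ u₁) with he1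
    set e2 : Fin 4 → W₀ ⧸ Ip := red (bΛ u₂) with he2
    set γv : Fin 4 → W₀ ⧸ Ip := red ghat with hγv
    have he1k : e1 ∈ LinearMap.ker Ψ := hkerΨ _ (hvLmem u₁ hu₁)
    have he2k : e2 ∈ LinearMap.ker Ψ := hkerΨ _ (hvLmem u₂ hu₂)
    have hγk : γv ∈ LinearMap.ker Ψ := hkerΨ ghat hgL
    obtain ⟨jj, hjjU, hjjp⟩ := hbad ghat hgM
    have hjju := hUne jj hjjU
    have hγjj : γv jj ≠ 0 := by
      rw [hγv, hred]
      intro h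
      exact hjjp ((hq0 _).mp h)
    have he1u : ∀ j, e1 j = if u₁ = j then 1 else 0 := fun j => hredb u₁ j
    have he2u : ∀ j, e2 j = if u₂ = j then 1 else 0 := fun j => hredb u₂ j
    -- dimension count
    have hS1 : (⊥ : Submodule (W₀ ⧸ Ip) (Fin 4 → W₀ ⧸ Ip)) < Submodule.span _ {e1} := by
      rw [bot_lt_iff_ne_bot, Ne, Submodule.span_singleton_eq_bot]
      intro h
      have h4 := congrFun h u₁
      rw [he1u] at h4
      simp at h4
    have hS12 : Submodule.span (W₀ ⧸ Ip) {e1} < Submodule.span (W₀ ⧸ Ip) {e1, e2} := by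
      refine lt_of_le_of_ne (Submodule.span_mono (by simp)) (fun h => ?_)
      have h4 : e2 ∈ Submodule.span (W₀ ⧸ Ip) {e1} := by
        rw [h]
        exact Submodule.subset_span (by simp)
      obtain ⟨cc, hcc⟩ := Submodule.mem_span_singleton.mp h4
      have h5 := congrFun hcc u₂
      rw [Pi.smul_apply, he1u, he2u, if_neg hu12, if_pos rfl, smul_zero] at h5
      exact one_ne_zero h5.symm
    have hS123 : Submodule.span (W₀ ⧸ Ip) {e1, e2} <
        Submodule.span (W₀ ⧸ Ip) {e1, e2, γv} := by
      refine lt_of_le_of_ne (Submodule.span_mono (by intro z hz; simp at hz; rcases hz with h|h <;> simp [h])) (fun h => ?_)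
      have h4 : γv ∈ Submodule.span (W₀ ⧸ Ip) {e1, e2} := by
        rw [h]
        exact Submodule.subset_span (by simp)
      obtain ⟨cc, dd, hcd⟩ := Submodule.mem_span_pair.mp h4
      have h5 := congrFun hcd jj
      simp only [Pi.add_apply, Pi.smul_apply, he1u, he2u, smul_eq_mul] at h5
      rw [if_neg (fun hh => hjju.1 hh.symm), if_neg (fun hh => hjju.2 hh.symm)] at h5
      simp at h5
      exact hγjj h5.symm
    have hker3 : Submodule.span (W₀ ⧸ Ip) {e1, e2, γv} ≤ LinearMap.ker Ψ := by
      rw [Submodule.span_le]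
      intro z hz
      simp only [Set.mem_insert_iff, Set.mem_singleton_iff] at hz
      rcases hz with h|h|h <;> rw [h]
      · exact he1k
      · exact he2k
      · exact hγk
    have hfr3 : 3 ≤ Module.finrank (W₀ ⧸ Ip) (LinearMap.ker Ψ) := by
      have f1 : Module.finrank (W₀ ⧸ Ip) (⊥ : Submodule (W₀ ⧸ Ip) (Fin 4 → W₀ ⧸ Ip))
          < Module.finrank (W₀ ⧸ Ip) (Submodule.span (W₀ ⧸ Ip) {e1}) :=
        Submodule.finrank_lt_finrank_of_lt hS1
      have f2 := Submodule.finrank_lt_finrank_of_lt hS12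
      have f3 := Submodule.finrank_lt_finrank_of_lt hS123
      have f4 := Submodule.finrank_mono hker3
      rw [finrank_bot] at f1
      omega
    have hconcl : ∃ vv : Fin 4 → W₀ ⧸ Ip, vv ≠ 0 ∧ vv ∈ LinearMap.ker Ψ ∧ vv ∈ LinearMap.ker Φ := by
      by_contra hcon
      push_neg at hcon
      have hinj : Function.Injective (Φ.comp (LinearMap.ker Ψ).subtype) := by
        rw [← LinearMap.ker_eq_bot]
        apply LinearMap.ker_eq_bot'.mpr
        intro m hm
        by_contra hm0
        have hmne : (m : Fin 4 → W₀ ⧸ Ip) ≠ 0 := fun h => hm0 (Subtype.ext h)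
        exact hcon _ hmne m.2 (LinearMap.mem_ker.mpr hm)
      have hle := LinearMap.finrank_le_finrank_of_injective hinj
      have hfr2 : Module.finrank (W₀ ⧸ Ip) ((W₀ ⧸ Ip) × (W₀ ⧸ Ip)) = 2 := by
        rw [Module.finrank_prod, Module.finrank_self]
      rw [hfr2] at hle
      omega
    obtain ⟨vv, hvv0, hvvΨ, hvvΦ⟩ := hconcl
    -- lift the kernel vector
    choose c hc using (fun j => Ideal.Quotient.mk_surjective (I := Ip) (vv j))
    set xN : N₀ := ∑ j, c j • v j with hxN
    set xhat : Λ := ∑ j, c j • bΛ j with hxhat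
    have hxcoe : ((xhat : Λ) : N₀) = xN := by
      rw [hxhat, hxN]
      exact coe_sum_smul Λ c (fun j => bΛ j)
    have hxrepr : ⇑(bΛ.repr xhat) = c := by
      rw [hxhat]
      exact bΛ.repr_sum_self c
    have hred_x : red xhat = vv := by
      funext j
      rw [hred]
      show q (bΛ.repr xhat j) = vv j
      rw [show bΛ.repr xhat j = c j from congrFun hxrepr j]
      exact hc j
    have hrowx : ∀ i, row i (red xhat) = 0 := by
      intro i
      rw [hred_x]
      rcases hsplit i with (h|h) | (h|h) <;> subst h
      · exact congrArg Prod.fst (LinearMap.mem_ker.mp hvvΨ)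
      · exact congrArg Prod.snd (LinearMap.mem_ker.mp hvvΨ)
      · exact congrArg Prod.fst (LinearMap.mem_ker.mp hvvΦ)
      · exact congrArg Prod.snd (LinearMap.mem_ker.mp hvvΦ)
    have hxform : ∀ i, ∃ d, form xN (a i • v i) = algebraMap W₀ K₀ (((p : ℕ) : W₀) * d) := by
      intro i
      have h0 : q (∑ j, bΛ.repr xhat j * w i j) = 0 := by
        rw [← hrow_red]
        exact hrowx i
      obtain ⟨d, hd⟩ := (hq0 _).mp h0
      have h2 := hpair xhat i
      rw [hd, map_mul] at h2
      have h3 : form xN (a i • v i) = algebraMap W₀ K₀ (a i) * form xN (v i) := by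
        rw [← IsScalarTower.algebraMap_smul K₀ (a i) (v i), map_smul, smul_eq_mul]
      by_cases hi : IsUnit (a i)
      · rw [if_pos hi] at h2
        refine ⟨a i * d, ?_⟩
        rw [h3, ← hxcoe, ← h2, map_mul, map_mul]
        ring
      · rw [if_neg hi] at h2
        have h4 : form ((xhat : Λ) : N₀) (v i) = algebraMap W₀ K₀ d := mul_left_cancel₀ hpK h2.symm
        obtain ⟨t, ht⟩ := hdivp _ hi
        refine ⟨t * d, ?_⟩
        rw [h3, ← hxcoe, h4, ht, map_mul, map_mul, map_mul]
        ring
    choose dd2 hdd2 using hxform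
    have hxM : ∀ m ∈ M₀, ∃ d, form xN m = algebraMap W₀ K₀ (((p : ℕ) : W₀) * d) := by
      intro m hm
      set m' : N' := ⟨⟨m, hMΛ hm⟩, Submodule.mem_comap.mpr hm⟩ with hm'
      have hrep := snf.bN.sum_repr m'
      have hmexp : m = ∑ j, snf.bN.repr m' j • (a j • v j) := by
        have h3 := congrArg (fun z : N' => ((z : Λ) : N₀)) hrep
        have h4 : (((∑ j, snf.bN.repr m' j • snf.bN j : N') : Λ) : N₀)
            = ∑ j, snf.bN.repr m' j • (a j • v j) := by
          have h5 : ((∑ j, snf.bN.repr m' j • snf.bN j : N') : Λ)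
              = ∑ j, snf.bN.repr m' j • ((snf.bN j : Λ)) := coe_sum_smul N' _ _
          rw [h5]
          have h6 : ∀ j, (snf.bN.repr m' j • ((snf.bN j : Λ))) = snf.bN.repr m' j • (a j • bΛ j) := by
            intro j; rw [hsnf']
          rw [Finset.sum_congr rfl (fun j _ => h6 j)]
          have h7 := coe_sum_smul Λ (fun j => snf.bN.repr m' j) (fun j => a j • bΛ j)
          rw [h7]
          rfl
        rw [h4] at h3
        exact h3.symm
      refine ⟨∑ j, snf.bN.repr m' j * dd2 j, ?_⟩
      have hterm : ∀ j, form xN (snf.bN.repr m' j • (a j • v j))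
          = algebraMap W₀ K₀ (((p : ℕ) : W₀) * (snf.bN.repr m' j * dd2 j)) := by
        intro j
        rw [← IsScalarTower.algebraMap_smul K₀ (snf.bN.repr m' j), map_smul, smul_eq_mul, hdd2 j,
          ← map_mul]
        congr 1
        ring
      conv_lhs => rw [hmexp]
      rw [map_sum, Finset.sum_congr rfl (fun j _ => hterm j), ← map_sum]
      congr 1
      rw [Finset.mul_sum]
    have hyΛ : (algebraMap W₀ K₀ ((p : ℕ) : W₀))⁻¹ • xN ∈ Λ := by
      intro m hm
      obtain ⟨d, hd⟩ := hxM m hm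
      rw [map_smul, LinearMap.smul_apply, smul_eq_mul, hd, map_mul]
      exact ⟨d, (inv_mul_cancel_left₀ hpK _).symm⟩
    have hxp : xhat = ((p : ℕ) : W₀) • (⟨_, hyΛ⟩ : Λ) := by
      apply Subtype.ext
      show ((xhat : Λ) : N₀) = ((p : ℕ) : W₀) • ((algebraMap W₀ K₀ ((p : ℕ) : W₀))⁻¹ • xN)
      rw [hxcoe, ← IsScalarTower.algebraMap_smul K₀ ((p : ℕ) : W₀)]
      exact (smul_inv_smul₀ hpK xN).symm
    have hvvzero : vv = 0 := by
      funext j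
      have h5 : bΛ.repr xhat j = ((p : ℕ) : W₀) * bΛ.repr (⟨_, hyΛ⟩ : Λ) j := by
        rw [hxp, map_smul, Finsupp.smul_apply, smul_eq_mul]
      rw [← hc j, show c j = bΛ.repr xhat j from (congrFun hxrepr j).symm, h5, map_mul]
      have hqp : q ((p : ℕ) : W₀) = 0 := (hq0 _).mpr dvd_rfl
      rw [hqp, zero_mul]
      rfl
    exact hvv0 hvvzero
  · -- at least three non-units: gives a chain of length 3, contradiction
    obtain ⟨t, htU, ht3⟩ := Finset.exists_subset_card_eq h3
    obtain ⟨j₁, j₂, j₃, h12, h13, h23, ht⟩ := Finset.card_eq_three.mp ht3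
    have hjU : ∀ jj, jj ∈ t → ¬ IsUnit (a jj) := fun jj hjj => (hmemU jj).mp (htU hjj)
    have hj₁ : ¬ IsUnit (a j₁) := hjU j₁ (by rw [ht]; simp)
    have hj₂ : ¬ IsUnit (a j₂) := hjU j₂ (by rw [ht]; simp)
    have hj₃ : ¬ IsUnit (a j₃) := hjU j₃ (by rw [ht]; simp)
    -- submodules of Λ
    set N'' : Submodule W₀ Λ := N' with hN''
    let Z : Fin 4 → Submodule W₀ Λ := fun jj =>
      Submodule.comap (bΛ.coord jj) (Ideal.span {((p : ℕ) : W₀)})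
    have hZmem : ∀ jj (y : Λ), y ∈ Z jj ↔ ((p : ℕ) : W₀) ∣ bΛ.repr y jj := by
      intro jj y
      show bΛ.coord jj y ∈ Ideal.span {((p : ℕ) : W₀)} ↔ _
      rw [Ideal.mem_span_singleton, Module.Basis.coord_apply]
    have hMZ : ∀ jj, ¬ IsUnit (a jj) → N' ≤ Z jj := by
      intro jj hjj y hy
      rw [hZmem]
      exact (hdivp _ hjj).trans ((memM_iff y).mp hy jj)
    have hbZ : ∀ i jj, i ≠ jj → bΛ i ∈ Z jj := by
      intro i jj hij
      rw [hZmem, Module.Basis.repr_self, Finsupp.single_apply]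
      simp [hij]
    have hbnZ : ∀ jj, ¬ IsUnit (a jj) → bΛ jj ∉ Z jj := by
      intro jj hjj h
      rw [hZmem, Module.Basis.repr_self, Finsupp.single_eq_same] at h
      exact hp_irr.not_isUnit (isUnit_of_dvd_one h)
    let Y₁ : Submodule W₀ Λ := N' ⊔ Submodule.span W₀ {bΛ j₁}
    let Y₂ : Submodule W₀ Λ := N' ⊔ Submodule.span W₀ {bΛ j₁, bΛ j₂}
    have hNY₁ : N' < Y₁ := by
      refine lt_of_le_of_ne le_sup_left (fun h => ?_)
      have : bΛ j₁ ∈ N' := by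
        rw [h]
        exact Submodule.mem_sup_right (Submodule.mem_span_singleton_self _)
      have h2 := (memM_iff (bΛ j₁)).mp this j₁
      rw [Module.Basis.repr_self, Finsupp.single_eq_same] at h2
      exact hj₁ (isUnit_of_dvd_one h2)
    have hY₁₂ : Y₁ < Y₂ := by
      refine lt_of_le_of_ne (sup_le_sup_left (Submodule.span_mono (by simp)) _) (fun h => ?_)
      have hmem : bΛ j₂ ∈ Y₁ := by
        rw [h]
        exact Submodule.mem_sup_right (Submodule.subset_span (by simp))
      have hY₁Z : Y₁ ≤ Z j₂ := sup_le (hMZ j₂ hj₂) (Submodule.span_le.mpr (by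
        intro z hz
        rw [Set.mem_singleton_iff] at hz
        rw [hz]
        exact hbZ j₁ j₂ h12))
      exact hbnZ j₂ hj₂ (hY₁Z hmem)
    have hY₂top : Y₂ < ⊤ := by
      refine lt_of_le_of_ne le_top (fun h => ?_)
      have hmem : bΛ j₃ ∈ Y₂ := by rw [h]; trivial
      have hY₂Z : Y₂ ≤ Z j₃ := sup_le (hMZ j₃ hj₃) (Submodule.span_le.mpr (by
        intro z hz
        rcases hz with hz | hz
        · rw [hz]; exact hbZ j₁ j₃ h13
        · rw [Set.mem_singleton_iff] at hz; rw [hz]; exact hbZ j₂ j₃ h23))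
      exact hbnZ j₃ hj₃ (hY₂Z hmem)
    -- transfer to the interval [M₀, Λ]
    have hmaps : ∀ {Y Y' : Submodule W₀ Λ}, Y < Y' →
        Submodule.map Λ.subtype Y < Submodule.map Λ.subtype Y' :=
      fun hYY => Submodule.map_strictMono_of_injective Λ.injective_subtype hYY
    have hmapN : Submodule.map Λ.subtype N' = M₀ := by
      rw [Submodule.map_comap_subtype]
      exact inf_eq_right.mpr hMΛ
    have hmapTop : Submodule.map Λ.subtype (⊤ : Submodule W₀ Λ) = Λ := Submodule.map_subtype_top Λ
    have c1 : M₀ < Submodule.map Λ.subtype Y₁ := lt_of_le_of_lt (le_of_eq hmapN.symm) (hmaps hNY₁)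
    have c2 : Submodule.map Λ.subtype Y₁ < Submodule.map Λ.subtype Y₂ := hmaps hY₁₂
    have c3 : Submodule.map Λ.subtype Y₂ < Λ := lt_of_lt_of_le (hmaps hY₂top) (le_of_eq hmapTop)
    exact not_chain3_of_krullDim_le_two le2
      (a := ⟨M₀, le_rfl, hMΛ⟩)
      (b := ⟨Submodule.map Λ.subtype Y₁, c1.le, c3.le.trans le_rfl |>.trans' c2.le⟩)
      (c := ⟨Submodule.map Λ.subtype Y₂, (c1.trans c2).le, c3.le⟩)
      (d := ⟨Λ, hMΛ, le_rfl⟩)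
      c1 c2 c3

end LemmaA


/-- Let `M₀` be admissible with `M₀ ≠ τ(M₀)` and both `M₀ + τ(M₀)`
and `M₀ ∩ τ(M₀)` τ-stable.  For a lattice `T₀` with `M₀ ⊂¹ T₀ ⊂¹ M₀^∨` the following
are equivalent: (a) `τ(M₀) ⊆ T₀`; (b) `M₀ ⊆ τ(T₀^∨)`; (c) `T₀ = M₀ + τ(M₀)`. -/
theorem statement_11
    (p : ℕ) (hp : Nat.Prime p) (hp_odd : p ≠ 2)
    {W₀ : Type*} [CommRing W₀] [IsDomain W₀] [IsDiscreteValuationRing W₀]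
    {K₀ : Type*} [Field K₀] [Algebra W₀ K₀] [IsFractionRing W₀ K₀]
    (hp_irr : Irreducible (p : W₀))
    (σ : K₀ ≃+* K₀) (σ₀ : W₀ ≃+* W₀)
    (hσ : ∀ c : W₀, algebraMap W₀ K₀ (σ₀ c) = σ (algebraMap W₀ K₀ c))
    {N₀ : Type*} [AddCommGroup N₀] [Module K₀ N₀] [Module W₀ N₀] [IsScalarTower W₀ K₀ N₀]
    (hdim : Module.finrank K₀ N₀ = 4)
    (form : N₀ →ₗ[K₀] N₀ →ₗ[K₀] K₀)
    (halt : ∀ x, form x x = 0)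
    (hnondeg : ∀ x, (∀ y, form x y = 0) → x = 0)
    (τ : N₀ →ₛₗ[(σ₀ : W₀ →+* W₀)] N₀)
    (hτ_bij : Function.Bijective τ)
    (hτ_semilinear : ∀ (a : K₀) (x : N₀), τ (a • x) = σ a • τ x)
    (hτ_form : ∀ x y, form (τ x) (τ y) = σ (form x y))
    (M₀ : Submodule W₀ N₀) (hM₀ : IsAdmissible p form τ M₀)
    (hne : M₀ ≠ mapLat τ M₀)
    (h_sup_stable : mapLat τ (M₀ ⊔ mapLat τ M₀) = M₀ ⊔ mapLat τ M₀)
    (h_inf_stable : mapLat τ (M₀ ⊓ mapLat τ M₀) = M₀ ⊓ mapLat τ M₀)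
    (T₀ : Submodule W₀ N₀)
    (hT₁ : SubIdx M₀ T₀ 1) (hT₂ : SubIdx T₀ (dualLat form M₀) 1) :
    (mapLat τ M₀ ≤ T₀ ↔ M₀ ≤ mapLat τ (dualLat form T₀)) ∧
    (M₀ ≤ mapLat τ (dualLat form T₀) ↔ T₀ = M₀ ⊔ mapLat τ M₀) := by
  classical
  have hlat := hM₀.1
  have hpD := hM₀.2.1
  have hsub2 := hM₀.2.2.1
  have hsubτ2 := hM₀.2.2.2.2
  set Λ : Submodule W₀ N₀ := dualLat form M₀ with hΛdef
  set L : Submodule W₀ N₀ := M₀ ⊔ mapLat τ M₀ with hLdef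
  have hMΛ : M₀ ≤ Λ := hsub2.1
  have hMτΛ : M₀ ≤ mapLat τ Λ := hsubτ2.1
  have hτM_le : mapLat τ M₀ ≤ Λ := by
    rintro _ ⟨u, hu, rfl⟩
    intro m hm
    obtain ⟨ww, hww, hwe⟩ := hMτΛ hm
    rw [← hwe, hτ_form]
    apply rng_sigma hσ
    rw [form_antisym form halt]
    exact neg_mem (hww u hu)
  have hL_le : L ≤ Λ := sup_le hMΛ hτM_le
  have cov1 : M₀ ⋖ T₀ := covBy_of_subIdx_one hT₁
  have cov2 : T₀ ⋖ Λ := covBy_of_subIdx_one hT₂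
  have hML : M₀ < L := lt_sup_map hne h_sup_stable
  have le2 : Order.krullDim (Set.Icc M₀ Λ) ≤ (2 : WithBot ℕ∞) := by
    have h1 : relLength M₀ Λ = (2 : WithBot ℕ∞) := by rw [hsub2.2]; norm_cast
    unfold relLength at h1
    exact le_of_eq h1
  have hLneΛ : L ≠ Λ := by
    intro h
    have hΛstab : mapLat τ Λ = Λ := by rw [← h]; exact h_sup_stable
    exact lemmaA hp_irr hσ hdim halt hτ_bij hτ_form hlat hpD hsub2 hne h_sup_stable hΛstab
  have hLltΛ : L < Λ := lt_of_le_of_ne hL_le hLneΛ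
  have hcovML : M₀ ⋖ L := by
    refine ⟨hML, fun X h1 h2 => ?_⟩
    exact not_chain3_of_krullDim_le_two le2 (a := ⟨M₀, le_rfl, hMΛ⟩)
      (b := ⟨X, h1.le, h2.le.trans hL_le⟩) (c := ⟨L, le_sup_left, hL_le⟩)
      (d := ⟨Λ, hMΛ, le_rfl⟩) (by exact h1) (by exact h2) (by exact hLltΛ)
  have hcovLΛ : L ⋖ Λ := by
    refine ⟨hLltΛ, fun X h1 h2 => ?_⟩
    exact not_chain3_of_krullDim_le_two le2 (a := ⟨M₀, le_rfl, hMΛ⟩)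
      (b := ⟨L, le_sup_left, hL_le⟩) (c := ⟨X, le_sup_left.trans h1.le, h2.le⟩)
      (d := ⟨Λ, hMΛ, le_rfl⟩) (by exact hML) (by exact h1) (by exact h2)
  have himp_ac : mapLat τ M₀ ≤ T₀ → T₀ = L := by
    intro ha
    have hLT : L ≤ T₀ := sup_le cov1.1.le ha
    by_contra hne2
    exact cov1.2 hML (lt_of_le_of_ne hLT (fun h => hne2 h.symm))
  have himp_cb : T₀ = L → M₀ ≤ mapLat τ (dualLat form T₀) := by
    intro h
    rw [h]
    have heq : dualLat form L = mapLat τ (dualLat form L) := by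
      conv_lhs => rw [← h_sup_stable]
      exact dualLat_mapLat hσ form hτ_bij hτ_form L
    rw [← heq]
    intro x hx y hy
    obtain ⟨m, hm, z, hz, rfl⟩ := Submodule.mem_sup.mp hy
    obtain ⟨u, hu, rfl⟩ := hz
    rw [map_add]
    refine add_mem (hMΛ hx m hm) ?_
    obtain ⟨ww, hww, hwe⟩ := hMτΛ hx
    rw [← hwe, hτ_form]
    exact rng_sigma hσ (hww u hu)
  have himp_ba : M₀ ≤ mapLat τ (dualLat form T₀) → mapLat τ M₀ ≤ T₀ := by
    intro hb
    have hbΛ : mapLat τ T₀ ≤ Λ := by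
      rintro _ ⟨t, ht, rfl⟩
      intro m hm
      obtain ⟨ww, hww, hwe⟩ := hb hm
      rw [← hwe, hτ_form]
      apply rng_sigma hσ
      rw [form_antisym form halt]
      exact neg_mem (hww t ht)
    by_contra hna
    have hcovτML : mapLat τ M₀ ⋖ L := by
      have h4 := mapLat_covBy τ hτ_bij hcovML
      rwa [h_sup_stable] at h4
    have hcovτT : mapLat τ M₀ ⋖ mapLat τ T₀ := mapLat_covBy τ hτ_bij cov1
    have hτT_not_L : ¬ mapLat τ T₀ ≤ L := by
      intro hle
      have hEq : mapLat τ T₀ = L := by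
        by_contra hne3
        exact hcovτML.2 hcovτT.1 (lt_of_le_of_ne hle hne3)
      have hTL : T₀ = L := by
        apply mapLat_inj τ hτ_bij.injective
        rw [hEq, h_sup_stable]
      exact hna (by rw [hTL]; exact le_sup_right)
    have hsup1 : L ⊔ mapLat τ T₀ = Λ := by
      have hlt : L < L ⊔ mapLat τ T₀ :=
        lt_of_le_of_ne le_sup_left (fun h => hτT_not_L (le_sup_right.trans h.ge))
      by_contra hne4
      exact hcovLΛ.2 hlt (lt_of_le_of_ne (sup_le hL_le hbΛ) hne4)
    have hLnotT : ¬ L ≤ T₀ := fun h => hna (le_sup_right.trans h)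
    have hsup2 : T₀ ⊔ L = Λ := by
      have hlt : T₀ < T₀ ⊔ L :=
        lt_of_le_of_ne le_sup_left (fun h => hLnotT (le_sup_right.trans h.ge))
      by_contra hne4
      exact cov2.2 hlt (lt_of_le_of_ne (sup_le cov2.1.le hL_le) hne4)
    have hτΛ : mapLat τ Λ = Λ := by
      have h1 : mapLat τ Λ = mapLat τ T₀ ⊔ L := by
        rw [← hsup2, mapLat_sup, h_sup_stable]
      rw [h1, sup_comm, hsup1]
    exact lemmaA hp_irr hσ hdim halt hτ_bij hτ_form hlat hpD hsub2 hne h_sup_stable hτΛ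
  exact ⟨⟨fun ha => himp_cb (himp_ac ha), himp_ba⟩,
    ⟨fun hb => himp_ac (himp_ba hb), himp_cb⟩⟩

end QURZ
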